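/- Let θ be an inner function, h ∈ L∞(ℝ), and G = [[conj(θ), 0], [h, θ]]. Then a function φ₁₊ ∈ H₂⁺ lies in the kernel of the truncated Toeplitz operator A_h^θ on K_θ if and only if there exists φ₂₊ ∈ H₂⁺ such that (φ₁₊, φ₂₊) ∈ ker T_G. In particular ker A_h^θ = {0} iff ker T_G = {0}. -/

import Mathlib

open MeasureTheory Complex Filter Set Matrix

noncomputable section
open scoped Classical

/-- The open upper half-plane. -/
def UHP : Set ℂ := {z : ℂ | 0 < z.im}

/-- The open lower half-plane. -/
def LHP : Set ℂ := {z : ℂ | z.im < 0}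

/-- The Hardy space `H₂⁺` of the upper half-plane, viewed as boundary functions on `ℝ`:
square-integrable functions that arise as a.e. vertical boundary limits of a holomorphic
function on `ℂ⁺` with uniformly bounded `L²`-means on horizontal lines. -/
def H2p : Set (ℝ → ℂ) :=
  {f | MemLp f 2 (volume : Measure ℝ) ∧ ∃ F : ℂ → ℂ,
    DifferentiableOn ℂ F UHP ∧
    (∃ C : ℝ, ∀ y : ℝ, 0 < y → ∫ x : ℝ, ‖F (x + y * Complex.I)‖ ^ 2 ≤ C) ∧
    (∀ᵐ x : ℝ ∂volume, Tendsto (fun y : ℝ => F (x + y * Complex.I))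
      (nhdsWithin 0 (Ioi 0)) (nhds (f x)))}

/-- The Hardy space `H₂⁻` of the lower half-plane, as boundary functions on `ℝ`. -/
def H2m : Set (ℝ → ℂ) :=
  {f | MemLp f 2 (volume : Measure ℝ) ∧ ∃ F : ℂ → ℂ,
    DifferentiableOn ℂ F LHP ∧
    (∃ C : ℝ, ∀ y : ℝ, y < 0 → ∫ x : ℝ, ‖F (x + y * Complex.I)‖ ^ 2 ≤ C) ∧
    (∀ᵐ x : ℝ ∂volume, Tendsto (fun y : ℝ => F (x + y * Complex.I))
      (nhdsWithin 0 (Iio 0)) (nhds (f x)))}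

/-- `H∞⁺`: boundary functions of bounded holomorphic functions on the upper half-plane. -/
def HinfP : Set (ℝ → ℂ) :=
  {f | ∃ F : ℂ → ℂ, DifferentiableOn ℂ F UHP ∧
    (∃ C : ℝ, ∀ z ∈ UHP, ‖F z‖ ≤ C) ∧
    (∀ᵐ x : ℝ ∂volume, Tendsto (fun y : ℝ => F (x + y * Complex.I))
      (nhdsWithin 0 (Ioi 0)) (nhds (f x)))}

/-- `H∞⁻`: boundary functions of bounded holomorphic functions on the lower half-plane. -/
def HinfM : Set (ℝ → ℂ) :=
  {f | ∃ F : ℂ → ℂ, DifferentiableOn ℂ F LHP ∧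
    (∃ C : ℝ, ∀ z ∈ LHP, ‖F z‖ ≤ C) ∧
    (∀ᵐ x : ℝ ∂volume, Tendsto (fun y : ℝ => F (x + y * Complex.I))
      (nhdsWithin 0 (Iio 0)) (nhds (f x)))}

/-- An inner function: an `H∞⁺` function of unit modulus a.e. on `ℝ`. -/
def IsInner (θ : ℝ → ℂ) : Prop := θ ∈ HinfP ∧ ∀ᵐ x : ℝ ∂volume, ‖θ x‖ = 1

/-- `a` divides `b` in `H∞⁺` (for inner functions: `a ⪯ b`). -/
def InnerDiv (a b : ℝ → ℂ) : Prop := ∃ c ∈ HinfP, ∀ᵐ x : ℝ ∂volume, b x = a x * c x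

/-- The model space `K_θ = H₂⁺ ∩ θ H₂⁻`. -/
def Kmodel (θ : ℝ → ℂ) : Set (ℝ → ℂ) :=
  {f | f ∈ H2p ∧ ∃ g ∈ H2m, ∀ᵐ x : ℝ ∂volume, f x = θ x * g x}

/-- The kernel of the Toeplitz operator with `2 × 2` symbol `G`: those `φ ∈ (H₂⁺)²`
with `Gφ ∈ (L₂)²` and `P⁺(Gφ) = 0`, i.e. `Gφ ∈ (H₂⁻)²`. -/
def kerT2 (G : Matrix (Fin 2) (Fin 2) (ℝ → ℂ)) : Set (Fin 2 → ℝ → ℂ) :=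
  {φ | (∀ i, φ i ∈ H2p) ∧ ∀ i, (fun x => ∑ j : Fin 2, G i j x * φ j x) ∈ H2m}

/-- The kernel of the Toeplitz operator with scalar symbol `g`: those `φ ∈ H₂⁺`
with `g·φ ∈ H₂⁻`. -/
def kerTs (g : ℝ → ℂ) : Set (ℝ → ℂ) :=
  {f | f ∈ H2p ∧ ∃ v ∈ H2m, ∀ᵐ x : ℝ ∂volume, g x * f x = v x}

/-- An outer function in `H∞⁺`, characterized by `O·H₂⁺` being dense in `H₂⁺`. -/
def IsOuter (O : ℝ → ℂ) : Prop :=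
  O ∈ HinfP ∧ ∀ g ∈ H2p, ∀ ε : ℝ, 0 < ε → ∃ f ∈ H2p,
    eLpNorm (fun x => O x * f x - g x) 2 (volume : Measure ℝ) < ENNReal.ofReal ε

/-- The kernel of the truncated Toeplitz operator `A_h^θ` on the model space `K_θ`:
`φ ∈ K_θ` with `P_θ(hφ) = 0`, i.e. `hφ ∈ θH₂⁺ ⊕ H₂⁻`. -/
def kerTTO (h θ : ℝ → ℂ) : Set (ℝ → ℂ) :=
  {φ | φ ∈ Kmodel θ ∧ ∃ u ∈ H2p, ∃ v ∈ H2m,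
    ∀ᵐ x : ℝ ∂volume, h x * φ x = θ x * u x + v x}

/-- A finite Blaschke product (for the upper half-plane) of degree `n`. -/
def IsFBPdeg (θ : ℝ → ℂ) (n : ℕ) : Prop :=
  ∃ (c : ℂ) (a : Fin n → ℂ), ‖c‖ = 1 ∧ (∀ k, 0 < (a k).im) ∧
    ∀ᵐ x : ℝ ∂volume,
      θ x = c * ∏ k : Fin n, ((x : ℂ) - a k) / ((x : ℂ) - starRingEnd ℂ (a k))

/-- A finite Blaschke product of some degree. -/
def IsFBP (θ : ℝ → ℂ) : Prop := ∃ n : ℕ, IsFBPdeg θ n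

/-- The function `r(ξ) = (ξ - i)/(ξ + i)`. -/
def rfun : ℝ → ℂ := fun x => ((x : ℂ) - Complex.I) / ((x : ℂ) + Complex.I)

/-- The singular inner function `ξ ↦ e^{iμξ}`. -/
def efun (μ : ℝ) : ℝ → ℂ := fun x => Complex.exp (Complex.I * μ * x)

/-- The Smirnov class `N⁺` of the upper half-plane, as boundary functions:
quotients `g/h` with `g, h ∈ H∞⁺` and `h` outer. -/
def SmirnovP (f : ℝ → ℂ) : Prop :=
  ∃ g ∈ HinfP, ∃ h : ℝ → ℂ, IsOuter h ∧ ∀ᵐ x : ℝ ∂volume, f x * h x = g x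

/-- Map a function to its class in `L²(ℝ)` (zero if it is not in `L²`). -/
def toL2 (f : ℝ → ℂ) : Lp ℂ 2 (volume : Measure ℝ) :=
  if hf : MemLp f 2 (volume : Measure ℝ) then hf.toLp f else 0

/-- Map a pair of functions to the corresponding pair of `L²` classes. -/
def Qmap (φ : Fin 2 → ℝ → ℂ) : Fin 2 → Lp ℂ 2 (volume : Measure ℝ) :=
  fun i => toL2 (φ i)

end


open MeasureTheory Complex Filter Set Matrix

private lemma H2m_congr' {f g : ℝ → ℂ} (hf : f ∈ H2m)
    (hfg : ∀ᵐ x : ℝ ∂volume, f x = g x) : g ∈ H2m := by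
  obtain ⟨hm, F, hdiff, hC, hlim⟩ := hf
  refine ⟨(memLp_congr_ae hfg).mp hm, F, hdiff, hC, ?_⟩
  filter_upwards [hlim, hfg] with x h1 h2
  rw [← h2]; exact h1

private lemma H2p_congr' {f g : ℝ → ℂ} (hf : f ∈ H2p)
    (hfg : ∀ᵐ x : ℝ ∂volume, f x = g x) : g ∈ H2p := by
  obtain ⟨hm, F, hdiff, hC, hlim⟩ := hf
  refine ⟨(memLp_congr_ae hfg).mp hm, F, hdiff, hC, ?_⟩
  filter_upwards [hlim, hfg] with x h1 h2
  rw [← h2]; exact h1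

private lemma H2p_neg' {f : ℝ → ℂ} (hf : f ∈ H2p) : (fun x => -f x) ∈ H2p := by
  obtain ⟨hm, F, hdiff, ⟨C, hC⟩, hlim⟩ := hf
  refine ⟨hm.neg, fun z => -F z, hdiff.neg, ⟨C, fun y hy => ?_⟩, ?_⟩
  · simpa using hC y hy
  · filter_upwards [hlim] with x hx using hx.neg

private lemma conj_mul_self_ae {θ : ℝ → ℂ} (hθ : IsInner θ) :
    ∀ᵐ x : ℝ ∂volume, starRingEnd ℂ (θ x) * θ x = 1 := by
  filter_upwards [hθ.2] with x hx
  have h1 : Complex.normSq (θ x) = 1 := by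
    rw [Complex.normSq_eq_norm_sq, hx]; norm_num
  rw [mul_comm, Complex.mul_conj, h1, Complex.ofReal_one]

/-- For `θ` inner, `h ∈ L∞` and `G = [[conj θ, 0], [h, θ]]`, a function `φ₁₊ ∈ H₂⁺`
lies in `ker A_h^θ` if and only if there is `φ₂₊ ∈ H₂⁺` with `(φ₁₊, φ₂₊) ∈ ker T_G`. -/
theorem mem_kerTTO_iff_exists_mem_kerT2
    (θ h : ℝ → ℂ) (hθ : IsInner θ) (hh : MemLp h ⊤ (volume : Measure ℝ))
    (φ₁ : ℝ → ℂ) (hφ₁ : φ₁ ∈ H2p) :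
    φ₁ ∈ kerTTO h θ ↔ ∃ φ₂ ∈ H2p,
      ![φ₁, φ₂] ∈ kerT2 !![fun x => starRingEnd ℂ (θ x), (0 : ℝ → ℂ); h, θ] := by
  constructor
  · rintro ⟨⟨hφ₁p, g, hg, hφg⟩, u, hu, v, hv, heq⟩
    refine ⟨fun x => -u x, H2p_neg' hu, ?_, ?_⟩
    · intro i
      fin_cases i
      · exact hφ₁p
      · exact H2p_neg' hu
    · intro i
      fin_cases i
      · refine H2m_congr' hg ?_
        filter_upwards [conj_mul_self_ae hθ, hφg] with x h1 h2
        simp [Fin.sum_univ_two]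
        rw [h2, ← mul_assoc, h1, one_mul]
      · refine H2m_congr' hv ?_
        filter_upwards [heq] with x h1
        simp [Fin.sum_univ_two]
        rw [h1]; ring
  · rintro ⟨φ₂, hφ₂, hmem, hrow⟩
    have hr0 := hrow 0
    have hr1 := hrow 1
    simp only [Fin.sum_univ_two] at hr0 hr1
    refine ⟨⟨hφ₁, _, hr0, ?_⟩, fun x => -φ₂ x, H2p_neg' hφ₂, _, hr1, ?_⟩
    · filter_upwards [conj_mul_self_ae hθ] with x h1
      simp only [Matrix.cons_val', Matrix.cons_val_zero, Matrix.cons_val_one,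
        Matrix.head_cons, Matrix.head_fin_const, Matrix.empty_val',
        Matrix.cons_val_fin_one, Matrix.of_apply, Pi.zero_apply]
      rw [mul_add, zero_mul, mul_zero, add_zero, ← mul_assoc, mul_comm (θ x), h1, one_mul]
    · filter_upwards with x
      simp only [Matrix.cons_val', Matrix.cons_val_zero, Matrix.cons_val_one,
        Matrix.head_cons, Matrix.head_fin_const, Matrix.empty_val',
        Matrix.cons_val_fin_one, Matrix.of_apply, Pi.zero_apply]
      ring
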